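/- arXiv:2604.05053 — 4 statements merged into one kernel-verified Lean document; each statement's English description precedes it below -/
import Mathlib

section
/- Let R → R' be a faithfully flat homomorphism of commutative rings and M an R-module such that M ⊗_R R' has flat dimension ≤ d over R'. Then M has flat dimension ≤ d over R. -/
open CategoryTheory TensorProduct

noncomputable section BaseChangeAux

variable (R R' : Type) [CommRing R] [CommRing R'] [Algebra R R']

/-- The base change functor `X ↦ R' ⊗[R] X`. -/
def bcFunctor : ModuleCat.{0} R ⥤ ModuleCat.{0} R' where
  obj X := ModuleCat.of R' (R' ⊗[R] X)
  map f := ModuleCat.ofHom (LinearMap.baseChange R' f.hom)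
  map_id _ := ModuleCat.hom_ext LinearMap.baseChange_id
  map_comp f g := ModuleCat.hom_ext (LinearMap.baseChange_comp f.hom g.hom)

instance : (bcFunctor R R').Additive where
  map_add := ModuleCat.hom_ext (LinearMap.baseChange_add _ _)

lemma bcFunctor_preservesHomology [Module.Flat R R'] :
    (bcFunctor R R').PreservesHomology := by
  refine ((Functor.exact_tfae (bcFunctor R R')).out 1 2).1 (fun S hS => ?_)
  rw [S.moduleCat_exact_iff_range_eq_ker] at hS
  rw [(S.map (bcFunctor R R')).moduleCat_exact_iff_range_eq_ker]
  have hS' : Function.Exact S.f S.g := LinearMap.exact_iff.2 hS.symm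
  have := Module.Flat.lTensor_exact (M := R') hS'
  have h2 : Function.Exact ((S.map (bcFunctor R R')).f) ((S.map (bcFunctor R R')).g) := by
    exact this
  exact (LinearMap.exact_iff.1 h2).symm

end BaseChangeAux

noncomputable section BC2

variable (R R' : Type) [CommRing R] [CommRing R'] [Algebra R R'] [Module.Flat R R']

/-- Base change of a projective resolution along a flat algebra. -/
def bcRes {N : ModuleCat.{0} R} (P : ProjectiveResolution N) :
    ProjectiveResolution ((bcFunctor R R').obj N) where
  complex := ((bcFunctor R R').mapHomologicalComplex _).obj P.complex
  projective n := by
    have h1 : Module.Projective R (P.complex.X n) :=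
      (IsProjective.iff_projective (P.complex.X n)).2 (P.projective n)
    have h2 : Module.Projective R' (R' ⊗[R] (P.complex.X n)) := inferInstance
    exact (IsProjective.iff_projective (R' ⊗[R] (P.complex.X n))).1 h2
  π := ((bcFunctor R R').mapHomologicalComplex _).map P.π ≫
    (HomologicalComplex.singleMapHomologicalComplex (bcFunctor R R') _ 0).hom.app N
  quasiIso := by
    haveI := bcFunctor_preservesHomology R R'
    infer_instance

end BC2

noncomputable section Eta

variable (R R' : Type) [CommRing R] [CommRing R'] [Algebra R R']
variable (M : Type) [AddCommGroup M] [Module R M]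

/-- `R' ⊗[R] (M ⊗[R] X) ≃ (R' ⊗[R] M) ⊗[R'] (R' ⊗[R] X)` -/
def epsilon (X : Type) [AddCommGroup X] [Module R X] :
    (R' ⊗[R] (M ⊗[R] X)) ≃ₗ[R'] (R' ⊗[R] M) ⊗[R'] (R' ⊗[R] X) :=
  (AlgebraTensorModule.assoc R R R' R' M X).symm.trans
    (AlgebraTensorModule.cancelBaseChange R R' R' (R' ⊗[R] M) X).symm

@[simp]
lemma epsilon_tmul (X : Type) [AddCommGroup X] [Module R X] (r : R') (m : M) (x : X) :
    epsilon R R' M X (r ⊗ₜ (m ⊗ₜ x)) = (r ⊗ₜ m) ⊗ₜ ((1 : R') ⊗ₜ x) := by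
  simp [epsilon]

/-- the natural isomorphism `(M ⊗ -) ⋙ bc ≅ bc ⋙ ((R'⊗M) ⊗ -)` -/
def etaIso :
    (MonoidalCategory.tensoringLeft (ModuleCat.{0} R)).obj (ModuleCat.of R M) ⋙ bcFunctor R R' ≅
      bcFunctor R R' ⋙
        (MonoidalCategory.tensoringLeft (ModuleCat.{0} R')).obj (ModuleCat.of R' (R' ⊗[R] M)) :=
  NatIso.ofComponents
    (fun X => LinearEquiv.toModuleIso (X₁ := R' ⊗[R] (M ⊗[R] X)) (epsilon R R' M X))
    (fun {X Y} g => by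
      ext z
      change R' ⊗[R] (M ⊗[R] X) at z
      induction z using TensorProduct.induction_on with
      | zero => exact (map_zero _).trans (map_zero _).symm
      | tmul r w =>
        induction w using TensorProduct.induction_on with
        | zero =>
          rw [TensorProduct.tmul_zero]
          exact (map_zero _).trans (map_zero _).symm
        | tmul m x =>
          change epsilon R R' M Y (r ⊗ₜ[R] (m ⊗ₜ[R] g x)) =
            (LinearMap.lTensor (R' ⊗[R] M) (LinearMap.baseChange R' g.hom)) (epsilon R R' M X (r ⊗ₜ[R] (m ⊗ₜ[R] x)))
          simp
        | add a b ha hb =>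
          rw [TensorProduct.tmul_add]
          exact (map_add _ _ _).trans ((congrArg₂ (· + ·) ha hb).trans (map_add _ _ _).symm)
      | add a b ha hb =>
        exact (map_add _ _ _).trans ((congrArg₂ (· + ·) ha hb).trans (map_add _ _ _).symm))

end Eta

noncomputable section HomIso

variable {C D : Type*} [Category C] [Category D] [Abelian C] [Abelian D]

/-- homology commutes with a homology-preserving functor -/
def homologyCommIso (F : C ⥤ D) [F.Additive] [F.PreservesHomology]
    {ι : Type*} {c : ComplexShape ι} (K : HomologicalComplex C c) (i : ι) :
    ((F.mapHomologicalComplex c).obj K).homology i ≅ F.obj (K.homology i) :=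
  (K.sc i).mapHomologyIso F

end HomIso


/-- If `R → R'` is faithfully flat and `R' ⊗[R] M` has flat dimension `≤ d`
over `R'`, then `M` has flat dimension `≤ d` over `R`. -/
theorem flatDimension_le_of_faithfullyFlat_descent
    (R R' : Type) [CommRing R] [CommRing R'] [Algebra R R'] [Module.FaithfullyFlat R R']
    (M : Type) [AddCommGroup M] [Module R M] (d : ℕ)
    (h : ∀ i : ℕ, d < i → ∀ N : ModuleCat.{0} R',
      Subsingleton
        (((Tor (ModuleCat R') i).obj (ModuleCat.of R' (R' ⊗[R] M))).obj N)) :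
    ∀ i : ℕ, d < i → ∀ N : ModuleCat.{0} R,
      Subsingleton (((Tor (ModuleCat R) i).obj (ModuleCat.of R M)).obj N) := by
  intro i hi N
  obtain ⟨P⟩ := (HasProjectiveResolution.out (Z := N))
  haveI := bcFunctor_preservesHomology R R'
  set E := bcFunctor R R' with hE
  set F := (MonoidalCategory.tensoringLeft (ModuleCat.{0} R)).obj (ModuleCat.of R M) with hF
  set F' := (MonoidalCategory.tensoringLeft (ModuleCat.{0} R')).obj
    (ModuleCat.of R' (R' ⊗[R] M)) with hF'
  set FP := (F.mapHomologicalComplex (ComplexShape.down ℕ)).obj P.complex with hFP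
  let i1 : E.obj (((Tor (ModuleCat R) i).obj (ModuleCat.of R M)).obj N) ≅
      E.obj (FP.homology i) := E.mapIso (P.isoLeftDerivedObj F i)
  let i2 : E.obj (FP.homology i) ≅
      ((E.mapHomologicalComplex _).obj FP).homology i := (homologyCommIso E FP i).symm
  let cIso : (E.mapHomologicalComplex (ComplexShape.down ℕ)).obj FP ≅
      (F'.mapHomologicalComplex (ComplexShape.down ℕ)).obj
        ((E.mapHomologicalComplex (ComplexShape.down ℕ)).obj P.complex) :=
    HomologicalComplex.Hom.isoOfComponents
      (fun n => (etaIso R R' M).app (P.complex.X n))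
      (fun n m _ => ((etaIso R R' M).hom.naturality (P.complex.d n m)).symm)
  let i3 : ((E.mapHomologicalComplex (ComplexShape.down ℕ)).obj FP).homology i ≅
      ((F'.mapHomologicalComplex (ComplexShape.down ℕ)).obj
        ((E.mapHomologicalComplex (ComplexShape.down ℕ)).obj P.complex)).homology i :=
    (HomologicalComplex.homologyFunctor _ _ i).mapIso cIso
  let i4 : ((F'.mapHomologicalComplex (ComplexShape.down ℕ)).obj
        ((E.mapHomologicalComplex (ComplexShape.down ℕ)).obj P.complex)).homology i ≅
      ((Tor (ModuleCat R') i).obj (ModuleCat.of R' (R' ⊗[R] M))).obj (E.obj N) :=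
    ((bcRes R R' P).isoLeftDerivedObj F' i).symm
  let BIG := i1 ≪≫ i2 ≪≫ i3 ≪≫ i4
  haveI : Subsingleton (((Tor (ModuleCat R') i).obj
      (ModuleCat.of R' (R' ⊗[R] M))).obj (E.obj N)) := h i hi (E.obj N)
  haveI : Subsingleton
      (R' ⊗[R] (((Tor (ModuleCat R) i).obj (ModuleCat.of R M)).obj N : Type)) :=
    Equiv.subsingleton (β := ((Tor (ModuleCat R') i).obj
      (ModuleCat.of R' (R' ⊗[R] M))).obj (E.obj N)) BIG.toLinearEquiv.toEquiv
  exact Module.FaithfullyFlat.lTensor_reflects_triviality R R' _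
end

section
/- Let P be a commutative cancellative monoid with Grothendieck group P^gp and k a commutative ring. Then the monoid algebra k[P^gp] is isomorphic to the localization of k[P] at the multiplicative set of monomials {X^p : p ∈ P}; in particular k[P^gp] is a flat k[P]-algebra. -/
/-- For a cancellative commutative monoid `P` with Grothendieck group `G`
(i.e. `ι : P →+ G` injective and every element of `G` is a difference of elements of `ι(P)`),
the monoid algebra `k[G]` is the localization of `k[P]` at the multiplicative set of
monomials `{X^p : p ∈ P}`; in particular `k[G]` is flat over `k[P]`. -/
theorem monoidAlgebra_grothendieck_group_isLocalization_and_flat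
    (k : Type) [CommRing k] (P : Type) [AddCancelCommMonoid P]
    (G : Type) [AddCommGroup G] (ι : P →+ G)
    (hinj : Function.Injective ι)
    (hgen : ∀ g : G, ∃ a b : P, g = ι a - ι b) :
    letI : Algebra (AddMonoidAlgebra k P) (AddMonoidAlgebra k G) :=
      (AddMonoidAlgebra.mapDomainRingHom k ι).toAlgebra
    IsLocalization
        (Submonoid.closure (Set.range (AddMonoidAlgebra.of' k P)))
        (AddMonoidAlgebra k G) ∧
      Module.Flat (AddMonoidAlgebra k P) (AddMonoidAlgebra k G) := by
  letI : Algebra (AddMonoidAlgebra k P) (AddMonoidAlgebra k G) :=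
    (AddMonoidAlgebra.mapDomainRingHom k ι).toAlgebra
  have halg : (algebraMap (AddMonoidAlgebra k P) (AddMonoidAlgebra k G)) =
      AddMonoidAlgebra.mapDomainRingHom k ι := rfl
  have hmap : ∀ (a : P) (c : k),
      algebraMap (AddMonoidAlgebra k P) (AddMonoidAlgebra k G)
        (AddMonoidAlgebra.single a c) = AddMonoidAlgebra.single (ι a) c := by
    intro a c
    rw [halg]
    exact AddMonoidAlgebra.mapDomain_single
  have hloc : IsLocalization
      (Submonoid.closure (Set.range (AddMonoidAlgebra.of' k P)))
      (AddMonoidAlgebra k G) := by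
    refine ⟨⟨?_, ?_, ?_⟩⟩
    · -- map_units
      rintro ⟨s, hs⟩
      simp only
      induction hs using Submonoid.closure_induction with
      | mem x hx =>
        obtain ⟨p, rfl⟩ := hx
        rw [AddMonoidAlgebra.of'_apply, hmap]
        refine isUnit_iff_exists_inv.2 ⟨AddMonoidAlgebra.single (-ι p) 1, ?_⟩
        rw [AddMonoidAlgebra.single_mul_single, add_neg_cancel, one_mul]
        rfl
      | one => simp
      | mul x y _ _ hx hy => rw [map_mul]; exact hx.mul hy
    · -- surj
      intro z
      induction z using AddMonoidAlgebra.induction with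
      | zero =>
        exact ⟨⟨0, 1⟩, by simp⟩
      | single_add g c f hg hc ih =>
        obtain ⟨⟨x₁, s₁⟩, h₁⟩ := ih
        obtain ⟨a, b, hab⟩ := hgen g
        have hb : AddMonoidAlgebra.single b (1:k) ∈
            Submonoid.closure (Set.range (AddMonoidAlgebra.of' k P)) :=
          Submonoid.subset_closure ⟨b, rfl⟩
        refine ⟨⟨x₁ * AddMonoidAlgebra.single b 1 +
            AddMonoidAlgebra.single (a) c * (s₁ : AddMonoidAlgebra k P),
          (⟨AddMonoidAlgebra.single b 1, hb⟩ :
            Submonoid.closure (Set.range (AddMonoidAlgebra.of' k P))) * s₁⟩, ?_⟩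
        · simp only [Submonoid.coe_mul, map_mul, map_add]
          rw [hmap, hmap]
          have hgb : AddMonoidAlgebra.single g c * AddMonoidAlgebra.single (ι b) (1:k)
              = AddMonoidAlgebra.single (ι a) c := by
            rw [AddMonoidAlgebra.single_mul_single, mul_one, hab, sub_add_cancel]

          linear_combination (AddMonoidAlgebra.single (ι b) (1:k)) * h₁ +
            (algebraMap (AddMonoidAlgebra k P) (AddMonoidAlgebra k G)
              (s₁ : AddMonoidAlgebra k P)) * hgb
    · -- exists_of_eq
      intro x y hxy
      refine ⟨1, ?_⟩
      have : Function.Injective (AddMonoidAlgebra.mapDomainRingHom k ι) :=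
        AddMonoidAlgebra.mapDomain_injective hinj
      rw [halg] at hxy
      simp [this hxy]
  exact ⟨hloc, IsLocalization.flat _ (Submonoid.closure (Set.range (AddMonoidAlgebra.of' k P)))⟩
end

section
/- Let k be a field, P a finitely generated commutative cancellative monoid, G an abelian group containing P, and N a finitely generated G-graded k[P]-module (i.e., N = ⊕_{g∈G} N_g with X^p · N_g ⊆ N_{p+g}). Then N admits a finite filtration 0 = N_0 ⊆ N_1 ⊆ ... ⊆ N_r = N by graded submodules such that each subquotient N_j/N_{j-1} is isomorphic, up to a shift of grading, to k[P]/k[𝔭_j] for some prime ideal 𝔭_j ⊆ P. -/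
/-- prime filtration of graded modules: Let `k` be a field, `P` a finitely
generated cancellative commutative monoid, `G` an abelian group containing `P` (via an
injective `ι : P →+ G`), and `N` a finitely generated `G`-graded `k[P]`-module, with
grading given by `k`-submodules `ℬ g` forming an internal direct sum and satisfying
`X^p • ℬ g ⊆ ℬ (ι p + g)`. Then `N` admits a finite filtration
`0 = N_0 ⊆ N_1 ⊆ ... ⊆ N_r = N` by graded submodules whose subquotients are isomorphic
(as `k[P]`-modules, i.e. up to a shift of grading) to `k[P]/k[𝔭_j]` for prime monoid
ideals `𝔭_j ⊆ P`. -/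
theorem graded_module_prime_filtration
    (k : Type) [Field k] (P : Type) [AddCancelCommMonoid P] [AddMonoid.FG P]
    (G : Type) [AddCommGroup G] [DecidableEq G] (ι : P →+ G)
    (hinj : Function.Injective ι)
    (N : Type) [AddCommGroup N] [Module k N] [Module (AddMonoidAlgebra k P) N]
    [IsScalarTower k (AddMonoidAlgebra k P) N]
    [Module.Finite (AddMonoidAlgebra k P) N]
    (ℬ : G → Submodule k N)
    (hdecomp : DirectSum.IsInternal ℬ)
    (hcompat : ∀ (p : P) (g : G) (x : N), x ∈ ℬ g →
      (AddMonoidAlgebra.of' k P p) • x ∈ ℬ (ι p + g)) :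
    ∃ (r : ℕ) (c : Fin (r + 1) → Submodule (AddMonoidAlgebra k P) N),
      Monotone c ∧ c 0 = ⊥ ∧ c (Fin.last r) = ⊤ ∧
      -- each step of the filtration is a graded submodule
      (∀ j : Fin (r + 1),
        Submodule.restrictScalars k (c j) =
          ⨆ g : G, (Submodule.restrictScalars k (c j) ⊓ ℬ g)) ∧
      -- each subquotient is (up to a shift of the grading) `k[P]/k[𝔭]` for a prime `𝔭`
      (∀ j : Fin r, ∃ p : Set P,
        (∀ x : P, ∀ s ∈ p, x + s ∈ p) ∧ p ≠ Set.univ ∧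
        (∀ x y : P, x + y ∈ p → x ∈ p ∨ y ∈ p) ∧
        Nonempty
          ((↥(c j.succ) ⧸
              Submodule.comap (c j.succ).subtype (c j.castSucc)) ≃ₗ[AddMonoidAlgebra k P]
            (AddMonoidAlgebra k P ⧸ Ideal.span (AddMonoidAlgebra.of' k P '' p)))) := by
  classical
  set R := AddMonoidAlgebra k P with hRdef
  haveI : IsNoetherianRing R := Algebra.FiniteType.isNoetherianRing k R
  haveI : IsNoetherian R N := isNoetherian_of_isNoetherianRing_of_finite R N
  letI : DirectSum.Decomposition ℬ := hdecomp.chooseDecomposition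
  -- homogeneous components
  let comp : G → N → N := fun h x => ↑(DirectSum.decompose ℬ x h)
  have comp_mem : ∀ h x, comp h x ∈ ℬ h := fun h x => (DirectSum.decompose ℬ x h).2
  have comp_add : ∀ h x y, comp h (x + y) = comp h x + comp h y := by
    intro h x y
    simp only [comp, DirectSum.decompose_add, DirectSum.add_apply, Submodule.coe_add]
  have comp_zero : ∀ h, comp h (0 : N) = 0 := by
    intro h
    simp only [comp, DirectSum.decompose_zero, DirectSum.zero_apply, Submodule.coe_zero]
  have comp_sum : ∀ (h : G) {α : Type} (s : Finset α) (f : α → N),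
      comp h (∑ i ∈ s, f i) = ∑ i ∈ s, comp h (f i) := by
    intro h α s f
    induction s using Finset.induction_on with
    | empty => simpa using comp_zero h
    | insert _ _ hnot ih =>
        rw [Finset.sum_insert hnot, Finset.sum_insert hnot, comp_add, ih]
  have comp_same : ∀ (g : G) (x : N), x ∈ ℬ g → comp g x = x := fun g x hx =>
    DirectSum.decompose_of_mem_same ℬ hx
  have comp_ne : ∀ (g h : G) (x : N), x ∈ ℬ g → g ≠ h → comp h x = 0 :=
    fun g h x hx hgh => DirectSum.decompose_of_mem_ne ℬ hx hgh
  have comp_eq_sum : ∀ x : N, ∃ s : Finset G, x = ∑ g ∈ s, comp g x := fun x =>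
    ⟨(DirectSum.decompose ℬ x).support, (DirectSum.sum_support_decompose ℬ x).symm⟩
  -- component-closed submodules
  let CC : Submodule R N → Prop := fun M => ∀ x ∈ M, ∀ h, comp h x ∈ M
  have CC_bot : CC ⊥ := by
    intro x hx h
    rw [Submodule.mem_bot] at hx
    subst hx
    rw [comp_zero]
    exact Submodule.zero_mem _
  have CC_iSup : ∀ M : Submodule R N, CC M →
      Submodule.restrictScalars k M =
        ⨆ g : G, (Submodule.restrictScalars k M ⊓ ℬ g) := by
    intro M hM
    apply le_antisymm
    · intro x hx
      obtain ⟨s, hs⟩ := comp_eq_sum x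
      rw [hs]
      exact Submodule.sum_mem _ fun g _ =>
        Submodule.mem_iSup_of_mem g ⟨hM x hx g, comp_mem g x⟩
    · exact iSup_le fun g => inf_le_left
  -- singles
  have single_eq : ∀ (q : P) (cc : k),
      (AddMonoidAlgebra.single q cc : R) = cc • AddMonoidAlgebra.of' k P q := by
    intro q cc
    rw [AddMonoidAlgebra.of'_apply, AddMonoidAlgebra.smul_single, smul_eq_mul, mul_one]
  have single_smul_mem : ∀ (q : P) (cc : k) (g : G) (x : N), x ∈ ℬ g →
      (AddMonoidAlgebra.single q cc : R) • x ∈ ℬ (ι q + g) := by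
    intro q cc g x hx
    rw [single_eq, smul_assoc]
    exact Submodule.smul_mem _ _ (hcompat q g x hx)
  have smul_eq_sum : ∀ (rr : R) (x : N),
      rr • x = ∑ q ∈ rr.coeff.support, (AddMonoidAlgebra.single q (rr.coeff q) : R) • x := by
    intro rr x
    conv_lhs => rw [← AddMonoidAlgebra.sum_coeff_single rr]
    rw [Finsupp.sum, Finset.sum_smul]
  -- Claim A: components of r • x for homogeneous x
  have compA : ∀ (M : Submodule R N), CC M → ∀ (g : G) (x : N), x ∈ ℬ g →
      ∀ (rr : R), rr • x ∈ M → ∀ q : P,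
      (AddMonoidAlgebra.single q (rr.coeff q) : R) • x ∈ M := by
    intro M hM g x hx rr hr q
    by_cases hq : q ∈ rr.coeff.support
    · have hcomp := hM _ hr (ι q + g)
      rw [smul_eq_sum, comp_sum] at hcomp
      have heq : (∑ p ∈ rr.coeff.support,
          comp (ι q + g) ((AddMonoidAlgebra.single p (rr.coeff p) : R) • x))
          = (AddMonoidAlgebra.single q (rr.coeff q) : R) • x := by
        rw [Finset.sum_eq_single_of_mem q hq]
        · exact comp_same _ _ (single_smul_mem q (rr.coeff q) g x hx)
        · intro p _ hpq
          refine comp_ne (ι p + g) (ι q + g) _ (single_smul_mem p (rr.coeff p) g x hx) ?_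
          intro hcontra
          exact hpq (hinj (add_right_cancel hcontra))
      rwa [heq] at hcomp
    · rw [Finsupp.notMem_support_iff.mp hq,
        show (AddMonoidAlgebra.single q (0 : k) : R) = 0 from AddMonoidAlgebra.single_zero q,
        zero_smul]
      exact Submodule.zero_mem _
  -- the set of graded submodules admitting a prime filtration
  let S : Set (Submodule R N) := {M | ∃ (r : ℕ) (c : Fin (r + 1) → Submodule R N),
    Monotone c ∧ c 0 = ⊥ ∧ c (Fin.last r) = M ∧ (∀ j, CC (c j)) ∧
    (∀ j : Fin r, ∃ p : Set P,
      (∀ x : P, ∀ s ∈ p, x + s ∈ p) ∧ p ≠ Set.univ ∧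
      (∀ x y : P, x + y ∈ p → x ∈ p ∨ y ∈ p) ∧
      Nonempty
        ((↥(c j.succ) ⧸
            Submodule.comap (c j.succ).subtype (c j.castSucc)) ≃ₗ[R]
          (R ⧸ Ideal.span (AddMonoidAlgebra.of' k P '' p))))}
  have hbot : (⊥ : Submodule R N) ∈ S :=
    ⟨0, fun _ => ⊥, monotone_const, rfl, rfl, fun _ => CC_bot, fun j => j.elim0⟩
  obtain ⟨M, hMS, hMmax⟩ :=
    set_has_maximal_iff_noetherian.mpr (inferInstance : IsNoetherian R N) S ⟨⊥, hbot⟩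
  obtain ⟨r, c, hmono, hc0, hclast, hCCall, hQ⟩ := hMS
  have hCCM : CC M := hclast ▸ hCCall (Fin.last r)
  have hMtop : M = ⊤ := by
    by_contra hne
    -- there is a homogeneous element outside M
    have hexists : ∃ (g : G) (x : N), x ∈ ℬ g ∧ x ∉ M := by
      by_contra hcon
      push_neg at hcon
      apply hne
      rw [eq_top_iff]
      intro y _
      obtain ⟨s, hs⟩ := comp_eq_sum y
      rw [hs]
      exact Submodule.sum_mem _ fun g _ => hcon g (comp g y) (comp_mem g y)
    obtain ⟨g1, x1, hx1g, hx1M⟩ := hexists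
    -- colon ideals
    let Ix : N → Ideal R := fun x => Submodule.comap (LinearMap.toSpanSingleton R N x) M
    have mem_Ix : ∀ (x : N) (rr : R), rr ∈ Ix x ↔ rr • x ∈ M := by
      intro x rr
      simp only [Ix, Submodule.mem_comap, LinearMap.toSpanSingleton_apply]
    -- choose homogeneous x with maximal colon ideal
    let J : Set (Ideal R) := {I | ∃ (g : G) (x : N), x ∈ ℬ g ∧ x ∉ M ∧ I = Ix x}
    obtain ⟨I0, hI0J, hI0max⟩ :=
      set_has_maximal_iff_noetherian.mpr
        (isNoetherianRing_iff.mp (inferInstance : IsNoetherianRing R)) J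
        ⟨Ix x1, g1, x1, hx1g, hx1M, rfl⟩
    obtain ⟨g0, x0, hx0g, hx0M, rfl⟩ := hI0J
    -- the monomial prime
    let p : Set P := {q | AddMonoidAlgebra.of' k P q • x0 ∈ M}
    have hp_ideal : ∀ x : P, ∀ s ∈ p, x + s ∈ p := by
      intro a s hs
      show AddMonoidAlgebra.of' k P (a + s) • x0 ∈ M
      have : AddMonoidAlgebra.of' k P (a + s) =
          AddMonoidAlgebra.of' k P a * AddMonoidAlgebra.of' k P s := by
        simp only [AddMonoidAlgebra.of'_apply, AddMonoidAlgebra.single_mul_single, one_mul]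
      rw [this, mul_smul]
      exact Submodule.smul_mem _ _ hs
    have hp_ne : p ≠ Set.univ := by
      intro hcon
      have h0 : (0 : P) ∈ p := hcon ▸ Set.mem_univ 0
      have : AddMonoidAlgebra.of' k P 0 • x0 ∈ M := h0
      rw [show AddMonoidAlgebra.of' k P 0 = (1 : R) from rfl, one_smul] at this
      exact hx0M this
    have hp_prime : ∀ x y : P, x + y ∈ p → x ∈ p ∨ y ∈ p := by
      intro a b hab
      by_cases hb : b ∈ p
      · exact Or.inr hb
      · left
        -- consider x' = of' b • x0
        have hx' : AddMonoidAlgebra.of' k P b • x0 ∈ ℬ (ι b + g0) :=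
          hcompat b g0 x0 hx0g
        have hx'M : AddMonoidAlgebra.of' k P b • x0 ∉ M := hb
        have hle : Ix x0 ≤ Ix (AddMonoidAlgebra.of' k P b • x0) := by
          intro rr hrr
          rw [mem_Ix] at hrr ⊢
          rw [smul_comm]
          exact Submodule.smul_mem _ _ hrr
        have heq : Ix x0 = Ix (AddMonoidAlgebra.of' k P b • x0) := by
          by_contra hneq
          exact hI0max (Ix (AddMonoidAlgebra.of' k P b • x0))
            ⟨ι b + g0, _, hx', hx'M, rfl⟩ (lt_of_le_of_ne hle hneq)
        have hmem : AddMonoidAlgebra.of' k P a ∈ Ix (AddMonoidAlgebra.of' k P b • x0) := by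
          rw [mem_Ix, smul_smul]
          have : AddMonoidAlgebra.of' k P a * AddMonoidAlgebra.of' k P b =
              AddMonoidAlgebra.of' k P (a + b) := by
            simp only [AddMonoidAlgebra.of'_apply, AddMonoidAlgebra.single_mul_single, one_mul]
          rw [this]
          exact hab
        rw [← heq, mem_Ix] at hmem
        exact hmem
    -- Claim B : Ix x0 is the monomial ideal of p
    have hIx_span : Ix x0 = Ideal.span (AddMonoidAlgebra.of' k P '' p) := by
      apply le_antisymm
      · intro rr hrr
        rw [mem_Ix] at hrr
        have hrw : rr = ∑ q ∈ rr.coeff.support, (AddMonoidAlgebra.single q (rr.coeff q) : R) := by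
          conv_lhs => rw [← AddMonoidAlgebra.sum_coeff_single rr]
          rfl
        rw [hrw]
        refine Submodule.sum_mem _ fun q hq => ?_
        have h1 : (AddMonoidAlgebra.single q (rr.coeff q) : R) • x0 ∈ M :=
          compA M hCCM g0 x0 hx0g rr hrr q
        have hne0 : rr.coeff q ≠ 0 := Finsupp.mem_support_iff.mp hq
        have hsm : (AddMonoidAlgebra.single q (rr.coeff q) : R) • x0 =
            (rr.coeff q) • (AddMonoidAlgebra.of' k P q • x0) := by
          rw [single_eq, smul_assoc]
        rw [hsm] at h1
        have h2 : AddMonoidAlgebra.of' k P q • x0 ∈ M := by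
          have h3 : (rr.coeff q)⁻¹ • ((rr.coeff q) • (AddMonoidAlgebra.of' k P q • x0)) ∈
              Submodule.restrictScalars k M :=
            Submodule.smul_mem _ _ h1
          rwa [inv_smul_smul₀ hne0] at h3
        rw [single_eq]
        exact Submodule.smul_of_tower_mem _ _
          (Ideal.subset_span ⟨q, h2, rfl⟩)
      · rw [Ideal.span_le]
        rintro _ ⟨q, hq, rfl⟩
        rw [SetLike.mem_coe, mem_Ix]
        exact hq
    -- the bigger submodule
    let M' : Submodule R N := M ⊔ Submodule.span R {x0}
    have hx0M' : x0 ∈ M' :=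
      Submodule.mem_sup_right (Submodule.mem_span_singleton_self x0)
    have hMltM' : M < M' := by
      refine lt_of_le_of_ne le_sup_left fun hcon => hx0M (hcon ▸ hx0M')
    -- M' is component-closed
    have hCCM' : CC M' := by
      intro y hy h
      obtain ⟨m, hm, z, hz, rfl⟩ := Submodule.mem_sup.mp hy
      obtain ⟨rr, rfl⟩ := Submodule.mem_span_singleton.mp hz
      rw [comp_add]
      refine Submodule.add_mem _ (Submodule.mem_sup_left (hCCM m hm h)) ?_
      rw [smul_eq_sum, comp_sum]
      refine Submodule.sum_mem _ fun q _ => ?_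
      rcases eq_or_ne (ι q + g0) h with he | hne2
      · rw [← he, comp_same _ _ (single_smul_mem q (rr.coeff q) g0 x0 hx0g)]
        exact Submodule.mem_sup_right
          (Submodule.smul_mem _ _ (Submodule.mem_span_singleton_self x0))
      · rw [comp_ne _ _ _ (single_smul_mem q (rr.coeff q) g0 x0 hx0g) hne2]
        exact Submodule.zero_mem _
    -- the quotient M'/M is R / span (of' '' p)
    have hquot : Nonempty ((↥M' ⧸ Submodule.comap M'.subtype M) ≃ₗ[R]
        (R ⧸ Ideal.span (AddMonoidAlgebra.of' k P '' p))) := by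
      let T : Submodule R ↥M' := Submodule.comap M'.subtype M
      let φ : R →ₗ[R] ↥M' ⧸ T :=
        T.mkQ.comp (LinearMap.toSpanSingleton R ↥M' ⟨x0, hx0M'⟩)
      have hsurj : Function.Surjective φ := by
        intro yq
        obtain ⟨y, rfl⟩ := Submodule.Quotient.mk_surjective T yq
        obtain ⟨m, hm, z, hz, hyz⟩ := Submodule.mem_sup.mp y.2
        obtain ⟨rr, rfl⟩ := Submodule.mem_span_singleton.mp hz
        refine ⟨rr, ?_⟩
        show Submodule.Quotient.mk (rr • (⟨x0, hx0M'⟩ : ↥M')) = Submodule.Quotient.mk y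
        rw [Submodule.Quotient.eq]
        show (↑(rr • (⟨x0, hx0M'⟩ : ↥M') - y) : N) ∈ M
        have : (↑(rr • (⟨x0, hx0M'⟩ : ↥M') - y) : N) = rr • x0 - ↑y := rfl
        rw [this, ← hyz]
        have : rr • x0 - (m + rr • x0) = -m := by abel
        rw [this]
        exact Submodule.neg_mem _ hm
      have hker : LinearMap.ker φ = Ideal.span (AddMonoidAlgebra.of' k P '' p) := by
        rw [← hIx_span]
        ext rr
        rw [LinearMap.mem_ker, mem_Ix]
        show Submodule.Quotient.mk (rr • (⟨x0, hx0M'⟩ : ↥M')) = 0 ↔ _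
        rw [Submodule.Quotient.mk_eq_zero]
        show (↑(rr • (⟨x0, hx0M'⟩ : ↥M')) : N) ∈ M ↔ _
        rfl
      exact ⟨(LinearMap.quotKerEquivOfSurjective φ hsurj).symm.trans
        (Submodule.quotEquivOfEq _ _ hker)⟩
    -- extend the filtration
    have hM'S : M' ∈ S := by
      refine ⟨r + 1, Fin.snoc c M', ?_, ?_, ?_, ?_, ?_⟩
      · refine Fin.monotone_iff_le_succ.mpr fun i => ?_
        induction i using Fin.lastCases with
        | last =>
            rw [Fin.snoc_castSucc,
              show (Fin.last r).succ = Fin.last (r + 1) from rfl, Fin.snoc_last, hclast]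
            exact le_of_lt hMltM'
        | cast i =>
            rw [Fin.snoc_castSucc,
              show (i.castSucc).succ = (i.succ).castSucc from rfl, Fin.snoc_castSucc]
            exact hmono (le_of_lt (Fin.castSucc_lt_succ (i := i)))
      · rw [show (0 : Fin (r + 2)) = Fin.castSucc 0 from rfl, Fin.snoc_castSucc]
        exact hc0
      · exact Fin.snoc_last _ _
      · intro j
        induction j using Fin.lastCases with
        | last => rw [Fin.snoc_last]; exact hCCM'
        | cast j => rw [Fin.snoc_castSucc]; exact hCCall j
      · intro j
        induction j using Fin.lastCases with
        | last =>
            have e1 : (Fin.snoc c M' : Fin (r + 2) → Submodule R N) (Fin.last r).succ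
                = M' := by
              rw [show ((Fin.last r).succ : Fin (r + 2)) = Fin.last (r + 1) from rfl,
                Fin.snoc_last]
            have e2 : (Fin.snoc c M' : Fin (r + 2) → Submodule R N) (Fin.last r).castSucc
                = M := by
              rw [Fin.snoc_castSucc, hclast]
            rw [e1, e2]
            exact ⟨p, hp_ideal, hp_ne, hp_prime, hquot⟩
        | cast j =>
            have e1 : (Fin.snoc c M' : Fin (r + 2) → Submodule R N) (j.castSucc).succ
                = c j.succ := by
              rw [show ((j.castSucc : Fin (r + 1))).succ = (j.succ).castSucc from rfl,
                Fin.snoc_castSucc]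
            have e2 : (Fin.snoc c M' : Fin (r + 2) → Submodule R N) (j.castSucc).castSucc
                = c j.castSucc := Fin.snoc_castSucc _ _ _
            rw [e1, e2]
            exact hQ j
    exact hMmax M' hM'S hMltM'
  exact ⟨r, c, hmono, hc0, hclast.trans hMtop, fun j => CC_iSup (c j) (hCCall j),
    fun j => hQ j⟩
end

section
/- Let P → Q be an injective, local, integral homomorphism of finitely generated cancellative commutative monoids and k a field. Then the induced ring map k[P] → k[Q] is flat. -/
section Aux

variable {P Q : Type} [AddCancelCommMonoid P] [AddCancelCommMonoid Q] (h : P →+ Q)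

/-- The relation `∃ p₁ p₂, h p₁ + a = h p₂ + b` on `Q`. -/
def MyRel (a b : Q) : Prop := ∃ p₁ p₂ : P, h p₁ + a = h p₂ + b

lemma myRel_refl (a : Q) : MyRel h a a := ⟨0, 0, rfl⟩

lemma myRel_symm {a b : Q} : MyRel h a b → MyRel h b a :=
  fun ⟨p, q, e⟩ => ⟨q, p, e.symm⟩

lemma myRel_trans {a b c : Q} : MyRel h a b → MyRel h b c → MyRel h a c := by
  rintro ⟨p₁, p₂, e₁⟩ ⟨p₃, p₄, e₂⟩
  refine ⟨p₃ + p₁, p₂ + p₄, ?_⟩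
  calc h (p₃ + p₁) + a = h p₃ + (h p₁ + a) := by rw [map_add, add_assoc]
    _ = h p₃ + (h p₂ + b) := by rw [e₁]
    _ = h p₂ + (h p₃ + b) := by rw [add_left_comm]
    _ = h p₂ + (h p₄ + c) := by rw [e₂]
    _ = h (p₂ + p₄) + c := by rw [map_add, add_assoc]

variable (hintegral : ∀ (p₁ p₂ : P) (q₁ q₂ : Q), h p₁ + q₁ = h p₂ + q₂ →
      ∃ (q : Q) (p₃ p₄ : P),
        q₁ = h p₃ + q ∧ q₂ = h p₄ + q ∧ p₁ + p₃ = p₂ + p₄)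

include hintegral in
/-- Any finite set of elements equivalent to `s₀` has a common "lower bound". -/
lemma myRel_lowerBound (S₁ : Finset Q) (s₀ : Q) (hall : ∀ s ∈ S₁, MyRel h s s₀) :
    ∃ q₀, MyRel h q₀ s₀ ∧ ∀ s ∈ S₁, ∃ p, s = h p + q₀ := by
  classical
  induction S₁ using Finset.induction with
  | empty => exact ⟨s₀, myRel_refl h s₀, by simp⟩
  | @insert a T hnot ih =>
    obtain ⟨q₁, hq₁, hT⟩ := ih (fun s hs => hall s (Finset.mem_insert_of_mem hs))
    have ha : MyRel h a q₁ :=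
      myRel_trans h (hall a (Finset.mem_insert_self a T)) (myRel_symm h hq₁)
    obtain ⟨p₁, p₂, e⟩ := ha
    obtain ⟨q, p₃, p₄, ha', hq₁', -⟩ := hintegral p₁ p₂ a q₁ e
    have hqq₁ : MyRel h q q₁ := ⟨p₄, 0, by rw [hq₁', map_zero, zero_add]⟩
    refine ⟨q, myRel_trans h hqq₁ hq₁, ?_⟩
    intro s hs
    rcases Finset.mem_insert.mp hs with rfl | hs
    · exact ⟨p₃, ha'⟩
    · obtain ⟨p, hp⟩ := hT s hs
      exact ⟨p + p₄, by rw [hp, hq₁', map_add, add_assoc]⟩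

include hintegral in
/-- A finite set can be covered by translates of disjoint "base points". -/
lemma exists_basePoints (S : Finset Q) : ∃ L : Finset Q,
    (∀ s ∈ S, ∃ q ∈ L, ∃ p, s = h p + q) ∧
    (∀ q ∈ L, ∃ s ∈ S, MyRel h q s) ∧
    (∀ q ∈ L, ∀ q' ∈ L, MyRel h q q' → q = q') := by
  classical
  induction S using Finset.strongInduction with
  | _ S ih =>
    rcases S.eq_empty_or_nonempty with rfl | ⟨s₀, hs₀⟩
    · exact ⟨∅, by simp, by simp, by simp⟩
    · set S₂ : Finset Q := S.filter (fun t => ¬ MyRel h t s₀) with hS₂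
      have hsub : S₂ ⊂ S := by
        refine Finset.ssubset_iff_of_subset (Finset.filter_subset _ _) |>.mpr ⟨s₀, hs₀, ?_⟩
        simp [hS₂, myRel_refl h s₀]
      obtain ⟨L₂, hcov₂, hrel₂, hsep₂⟩ := ih S₂ hsub
      -- lower bound for the class of s₀
      obtain ⟨q₀, hq₀, hq₀all⟩ := myRel_lowerBound h hintegral
        (S.filter (fun t => MyRel h t s₀)) s₀ (fun s hs => (Finset.mem_filter.mp hs).2)
      have hL₂rel : ∀ q ∈ L₂, ∃ s ∈ S₂, MyRel h q s := hrel₂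
      refine ⟨insert q₀ L₂, ?_, ?_, ?_⟩
      · intro s hs
        by_cases hrel : MyRel h s s₀
        · obtain ⟨p, hp⟩ := hq₀all s (Finset.mem_filter.mpr ⟨hs, hrel⟩)
          exact ⟨q₀, Finset.mem_insert_self _ _, p, hp⟩
        · obtain ⟨q, hq, hp⟩ := hcov₂ s (Finset.mem_filter.mpr ⟨hs, hrel⟩)
          exact ⟨q, Finset.mem_insert_of_mem hq, hp⟩
      · intro q hq
        rcases Finset.mem_insert.mp hq with rfl | hq
        · exact ⟨s₀, hs₀, hq₀⟩
        · obtain ⟨s, hs, hrel⟩ := hL₂rel q hq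
          exact ⟨s, Finset.filter_subset _ _ hs, hrel⟩
      · intro q hq q' hq' hrel
        rcases Finset.mem_insert.mp hq with rfl | hq
        · rcases Finset.mem_insert.mp hq' with rfl | hq'
          · rfl
          · obtain ⟨s, hs, hrel'⟩ := hL₂rel q' hq'
            have : MyRel h s s₀ := myRel_trans h (myRel_symm h hrel')
              (myRel_trans h (myRel_symm h hrel) hq₀)
            exact absurd this (Finset.mem_filter.mp hs).2
        · rcases Finset.mem_insert.mp hq' with h' | hq'
          · obtain ⟨s, hs, hrel'⟩ := hL₂rel q hq
            have : MyRel h s s₀ :=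
              myRel_trans h (myRel_symm h hrel') (myRel_trans h (h' ▸ hrel) hq₀)
            exact absurd this (Finset.mem_filter.mp hs).2
          · exact hsep₂ q hq q' hq' hrel

end Aux

/-- For an injective, local, integral homomorphism `h : P → Q` of finitely
generated cancellative commutative monoids and a field `k`, the induced map
`k[P] → k[Q]` of monoid algebras is flat. -/
theorem monoidAlgebra_flat_of_injective_local_integral
    (k : Type) [Field k]
    (P Q : Type) [AddCancelCommMonoid P] [AddCancelCommMonoid Q]
    [AddMonoid.FG P] [AddMonoid.FG Q]
    (h : P →+ Q)
    (hinj : Function.Injective h)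
    (hlocal : ∀ p : P, IsAddUnit (h p) → IsAddUnit p)
    (hintegral : ∀ (p₁ p₂ : P) (q₁ q₂ : Q), h p₁ + q₁ = h p₂ + q₂ →
      ∃ (q : Q) (p₃ p₄ : P),
        q₁ = h p₃ + q ∧ q₂ = h p₄ + q ∧ p₁ + p₃ = p₂ + p₄) :
    letI : Algebra (AddMonoidAlgebra k P) (AddMonoidAlgebra k Q) :=
      (AddMonoidAlgebra.mapDomainRingHom k h).toAlgebra
    Module.Flat (AddMonoidAlgebra k P) (AddMonoidAlgebra k Q) := by
  classical
  letI : Algebra (AddMonoidAlgebra k P) (AddMonoidAlgebra k Q) :=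
      (AddMonoidAlgebra.mapDomainRingHom k h).toAlgebra
  have hfinj : ∀ q : Q, Function.Injective (fun p : P => h p + q) := by
    intro q p p' e
    exact hinj (add_right_cancel (a := h p) (b := q) (by simpa using e))
  -- multiplication by a single on the right is mapDomain of translation
  have hms : ∀ (c : AddMonoidAlgebra k Q) (q : Q),
      (c * AddMonoidAlgebra.single q (1 : k)).coeff = Finsupp.mapDomain (· + q) c.coeff := by
    intro c q
    obtain ⟨c, rfl⟩ : ∃ c' : Q →₀ k, c = AddMonoidAlgebra.ofCoeff c' := ⟨c.coeff, rfl⟩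
    induction c using Finsupp.induction_linear with
    | zero => simp
    | add a b ha hb =>
      rw [AddMonoidAlgebra.ofCoeff_add, add_mul, AddMonoidAlgebra.coeff_add, ha, hb,
        AddMonoidAlgebra.coeff_add, Finsupp.mapDomain_add]
    | single a b =>
      show (AddMonoidAlgebra.single a b * AddMonoidAlgebra.single q (1 : k)).coeff
          = Finsupp.mapDomain (· + q) (Finsupp.single a b)
      rw [AddMonoidAlgebra.single_mul_single, mul_one, AddMonoidAlgebra.coeff_single,
        Finsupp.mapDomain_single]
  have hsmul : ∀ (b : AddMonoidAlgebra k P) (q : Q),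
      (b • (AddMonoidAlgebra.single q (1 : k) : AddMonoidAlgebra k Q)).coeff
        = Finsupp.mapDomain (fun p => h p + q) b.coeff := by
    intro b q
    rw [Algebra.smul_def, RingHom.algebraMap_toAlgebra,
      AddMonoidAlgebra.mapDomainRingHom_apply, hms, AddMonoidAlgebra.coeff_mapDomain,
      show (fun p : P => h p + q) = (· + q) ∘ h from rfl, Finsupp.mapDomain_comp]
  refine Module.Flat.iff_forall_isTrivialRelation.mpr ?_
  intro ι f x hfx
  set S : Finset Q := Finset.univ.biUnion (fun i => (x i).coeff.support) with hS
  obtain ⟨L, hcov, -, hsep⟩ := exists_basePoints h hintegral S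
  have hdisj : ∀ (j j' : ↥L), j ≠ j' → ∀ (p p' : P), h p + (j : Q) ≠ h p' + (j' : Q) := by
    intro j j' hne p p' e
    exact hne (Subtype.ext (hsep _ j.2 _ j'.2 ⟨p, p', e⟩))
  set A : Fin ι → ↥L → AddMonoidAlgebra k P :=
    fun i j => AddMonoidAlgebra.comapDomain (fun p => h p + (j : Q)) (hfinj _) (x i) with hA
  set y : ↥L → AddMonoidAlgebra k Q := fun j => AddMonoidAlgebra.single (j : Q) (1 : k) with hy
  -- evaluation of a sum of translates at a point in one of the ranges
  have heval : ∀ (g : ↥L → AddMonoidAlgebra k P) (j₀ : ↥L) (p : P),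
      (∑ j, g j • y j).coeff (h p + (j₀ : Q)) = (g j₀).coeff p := by
    intro g j₀ p
    rw [AddMonoidAlgebra.coeff_sum, Finsupp.finset_sum_apply]
    rw [Finset.sum_eq_single j₀]
    · rw [hsmul]
      exact Finsupp.mapDomain_apply (hfinj _) (g j₀).coeff p
    · intro j _ hne
      rw [hsmul]
      apply Finsupp.mapDomain_notin_range
      rintro ⟨p', hp'⟩
      exact hdisj j j₀ hne p' p hp'
    · intro hj; exact absurd (Finset.mem_univ j₀) hj
  have heval0 : ∀ (g : ↥L → AddMonoidAlgebra k P) (t : Q),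
      (∀ (j : ↥L) (p : P), t ≠ h p + (j : Q)) → (∑ j, g j • y j).coeff t = 0 := by
    intro g t ht
    rw [AddMonoidAlgebra.coeff_sum, Finsupp.finset_sum_apply]
    refine Finset.sum_eq_zero fun j _ => ?_
    rw [hsmul]
    apply Finsupp.mapDomain_notin_range
    rintro ⟨p, hp⟩
    exact ht j p hp.symm
  have hxdecomp : ∀ i, x i = ∑ j, A i j • y j := by
    intro i
    ext t
    by_cases ht : ∃ (j : ↥L) (p : P), t = h p + (j : Q)
    · obtain ⟨j₀, p₀, rfl⟩ := ht
      rw [heval]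
      simp [hA, Finsupp.comapDomain_apply]
    · push_neg at ht
      rw [heval0 _ _ ht]
      by_contra hxt
      have hmem : t ∈ S := by
        rw [hS]
        exact Finset.mem_biUnion.mpr ⟨i, Finset.mem_univ i, Finsupp.mem_support_iff.mpr hxt⟩
      obtain ⟨q, hq, p, hp⟩ := hcov t hmem
      exact ht ⟨q, hq⟩ p hp
  refine ⟨L.card, fun i j => A i (L.equivFin.symm j), fun j => y (L.equivFin.symm j),
    fun i => (hxdecomp i).trans (Fintype.sum_equiv L.equivFin.symm _ _ (fun _ => rfl)).symm, ?_⟩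
  intro j₀
  obtain ⟨j₀, rfl⟩ := L.equivFin.surjective j₀
  simp only [Equiv.symm_apply_apply]
  have h0 : (∑ j, (∑ i, f i * A i j) • y j) = 0 := by
    calc ∑ j, (∑ i, f i * A i j) • y j
        = ∑ j, ∑ i, (f i * A i j) • y j := by
          exact Finset.sum_congr rfl fun j _ => Finset.sum_smul
      _ = ∑ i, ∑ j, (f i * A i j) • y j := Finset.sum_comm
      _ = ∑ i, f i • x i := by
          refine Finset.sum_congr rfl fun i _ => ?_
          rw [hxdecomp i, Finset.smul_sum]
          exact Finset.sum_congr rfl fun j _ => (smul_smul (f i) (A i j) (y j)).symm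
      _ = 0 := hfx
  ext p
  have h1 := heval (fun j => ∑ i, f i * A i j) j₀ p
  rw [h0] at h1
  simpa using h1.symm
end
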